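/- There exist nonnegative rationals fʳᵢⱼ, fʷᵢⱼ (i, j ∈ {0,1}) with fᵢⱼ = fʳᵢⱼ + fʷᵢⱼ, f₁₁ + f₀₁ > 0, f₁₀ + f₀₀ > 0, and not all fʷᵢⱼ equal to 0, such that the training-data score δ = f₁₁/(f₁₁+f₀₁) − f₁₀/(f₁₀+f₀₀) is nonzero while the prediction score δ̂ = (fʳ₁₁ + fʷ₀₁)/(f₁₁+f₀₁) − (fʳ₁₀ + fʷ₀₀)/(f₁₀+f₀₀) equals 0. (A witness: f₁₁ = 1, f₀₁ = 5, f₁₀ = 6, f₀₀ = 2, so δ = 1/6 − 3/4 ≠ 0, with fʳ₁₁ = 1, fʷ₀₁ = 2, fʳ₀₁ = 3, fʳ₁₀ = 4, fʷ₁₀ = 2, fʳ₀₀ = 2, giving δ̂ = 3/6 − 4/8 = 0.) Hence an imperfect model trained on discriminatory data can be discrimination-free, and the discrimination of an imperfect model is independent of the discrimination of the training data. -/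
import Mathlib


/-- An imperfect model trained on discriminatory data (δ ≠ 0)
can be discrimination-free (δ̂ = 0). -/
theorem discriminatory_data_fair_model :
    ∃ fr11 fw11 fr01 fw01 fr10 fw10 fr00 fw00 f11 f01 f10 f00 : ℚ,
      0 ≤ fr11 ∧ 0 ≤ fw11 ∧ 0 ≤ fr01 ∧ 0 ≤ fw01 ∧
      0 ≤ fr10 ∧ 0 ≤ fw10 ∧ 0 ≤ fr00 ∧ 0 ≤ fw00 ∧
      f11 = fr11 + fw11 ∧ f01 = fr01 + fw01 ∧
      f10 = fr10 + fw10 ∧ f00 = fr00 + fw00 ∧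
      0 < f11 + f01 ∧ 0 < f10 + f00 ∧
      ¬(fw11 = 0 ∧ fw01 = 0 ∧ fw10 = 0 ∧ fw00 = 0) ∧
      f11 / (f11 + f01) - f10 / (f10 + f00) ≠ 0 ∧
      (fr11 + fw01) / (f11 + f01) - (fr10 + fw00) / (f10 + f00) = 0 := by
  refine ⟨1, 0, 3, 2, 4, 2, 2, 0, 1, 5, 6, 2, ?_⟩
  norm_num
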